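/- If k1 is uniform on {0,1}^n, k2 is uniform on {0,1}^m, and k1, k2 are independent, then for any fixed ca ∈ {0,1}^n, any fixed ra in an address space of size 2^m, and any fixed set Valid of size V, the probability that ca = k1 and ra ∈ Π_{k2}(Valid) is at most (1/2^n)·(V/2^m). -/

import Mathlib

open scoped ENNReal

section aux
open Equiv Finset
variable {α : Type*} [Fintype α] [DecidableEq α]

private def fiberEquiv (ra a a' : α) :
    {π : Perm α // π.symm ra = a} ≃ {π : Perm α // π.symm ra = a'} where
  toFun x := ⟨(Equiv.swap a a').trans x.1, by simp [Equiv.symm_trans_apply, x.2]⟩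
  invFun y := ⟨(Equiv.swap a a').trans y.1, by simp [Equiv.symm_trans_apply, y.2]⟩
  left_inv x := Subtype.ext (by ext y; simp)
  right_inv y := Subtype.ext (by ext z; simp)

private lemma fiber_card (ra a : α) :
    (Finset.univ.filter fun π : Perm α => π.symm ra = a).card
      = (Finset.univ.filter fun π : Perm α => π.symm ra = ra).card := by
  rw [← Fintype.card_subtype, ← Fintype.card_subtype]
  exact Fintype.card_congr (fiberEquiv ra a ra)

private lemma count_valid (ra : α) (Valid : Finset α) :
    (Finset.univ.filter fun π : Perm α => π.symm ra ∈ Valid).card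
      = Valid.card * (Finset.univ.filter fun π : Perm α => π.symm ra = ra).card := by
  rw [Finset.card_eq_sum_card_fiberwise (f := fun π : Perm α => π.symm ra) (t := Valid)
    (s := Finset.univ.filter fun π : Perm α => π.symm ra ∈ Valid)
    (fun π hπ => (Finset.mem_filter.mp (Finset.mem_coe.mp hπ)).2)]
  rw [Finset.sum_congr rfl (fun a ha => ?_), Finset.sum_const, smul_eq_mul]
  rw [Finset.filter_filter, ← fiber_card ra a]
  congr 1
  apply Finset.filter_congr
  intro π _
  simp only [and_iff_right_iff_imp]
  rintro rfl; exact ha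

private lemma count_total (ra : α) :
    Fintype.card (Perm α)
      = Fintype.card α * (Finset.univ.filter fun π : Perm α => π.symm ra = ra).card := by
  rw [← Finset.card_univ (α := Perm α),
    Finset.card_eq_sum_card_fiberwise (f := fun π : Perm α => π.symm ra) (t := Finset.univ)
    (fun π _ => Finset.mem_univ _)]
  rw [Finset.sum_congr rfl (fun a _ => fiber_card ra a), Finset.sum_const, smul_eq_mul,
    Finset.card_univ]

end aux

theorem canary_aslr_single_attempt (n m V : ℕ)
    (ca : Fin n → Bool) (ra : Fin (2 ^ m)) (Valid : Finset (Fin (2 ^ m)))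
    (hV : Valid.card = V) :
    (PMF.uniformOfFintype ((Fin n → Bool) × Equiv.Perm (Fin (2 ^ m)))).toOuterMeasure
        {p : (Fin n → Bool) × Equiv.Perm (Fin (2 ^ m)) |
          ca = p.1 ∧ ra ∈ Valid.image p.2} ≤
      (1 / 2 ^ n) * ((V : ℝ≥0∞) / 2 ^ m) := by

  set c := (Finset.univ.filter fun π : Equiv.Perm (Fin (2 ^ m)) => π.symm ra = ra).card with hc
  have hmem : ∀ π : Equiv.Perm (Fin (2 ^ m)), (ra ∈ Valid.image π) ↔ π.symm ra ∈ Valid := by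
    intro π
    constructor
    · rintro h
      obtain ⟨a, ha, rfl⟩ := Finset.mem_image.mp h
      simpa using ha
    · intro h
      exact Finset.mem_image.mpr ⟨π.symm ra, h, by simp⟩
  have e : {p : (Fin n → Bool) × Equiv.Perm (Fin (2 ^ m)) |
        ca = p.1 ∧ ra ∈ Valid.image p.2} ≃ {π : Equiv.Perm (Fin (2 ^ m)) // π.symm ra ∈ Valid} :=
    { toFun := fun x => ⟨x.1.2, (hmem x.1.2).mp x.2.2⟩
      invFun := fun y => ⟨(ca, y.1), ⟨rfl, (hmem y.1).mpr y.2⟩⟩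
      left_inv := fun x => by
        obtain ⟨⟨k1, π⟩, hk, hπ⟩ := x
        simp [hk]
      right_inv := fun y => rfl }
  have htot : Fintype.card ((Fin n → Bool) × Equiv.Perm (Fin (2 ^ m)))
      = 2 ^ n * (2 ^ m * c) := by
    rw [Fintype.card_prod, count_total ra, Fintype.card_fin]
    simp
    rfl
  have hc0 : (c : ℝ≥0∞) ≠ 0 := by
    have : (1 : Equiv.Perm (Fin (2 ^ m))) ∈
        Finset.univ.filter fun π : Equiv.Perm (Fin (2 ^ m)) => π.symm ra = ra := by
      simp
      rfl
    have hcpos : 0 < c := Finset.card_pos.mpr ⟨1, this⟩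
    exact_mod_cast hcpos.ne'
  have hcT : (c : ℝ≥0∞) ≠ ⊤ := ENNReal.natCast_ne_top c
  have h2 : Nat.card {π : Equiv.Perm (Fin (2 ^ m)) // π.symm ra ∈ Valid} = V * c := by
    rw [Nat.card_eq_fintype_card, Fintype.card_subtype, count_valid, hV]
  have hS : ∀ (inst : Fintype ↥{p : (Fin n → Bool) × Equiv.Perm (Fin (2 ^ m)) |
        ca = p.1 ∧ ra ∈ Valid.image p.2}), @Fintype.card _ inst = V * c := fun inst =>
    (@Nat.card_eq_fintype_card _ inst).symm.trans ((Nat.card_congr e).trans h2)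
  rw [PMF.toOuterMeasure_uniformOfFintype_apply, hS, htot]
  push_cast
  rw [show ((2 : ℝ≥0∞) ^ n * (2 ^ m * c)) = (2 ^ n * 2 ^ m) * c by ring,
    ENNReal.mul_div_mul_right _ _ hc0 hcT]
  apply le_of_eq
  rw [div_eq_mul_inv, div_eq_mul_inv, div_eq_mul_inv,
    ENNReal.mul_inv (Or.inl (by positivity)) (Or.inl (ENNReal.pow_ne_top ENNReal.ofNat_ne_top)),
    one_mul]
  ring
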